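/- Let 0 < λ₂ ≤ λ_N be real numbers. Set r* = (√λ_N − √λ₂)/(√λ_N + √λ₂), ε₀* = 4/(√λ_N + √λ₂)², ε₁* = 0, θ₀* = (r*)². Then for every λ with λ₂ ≤ λ ≤ λ_N, every complex root of the quadratic z² + (ε₀*λ − 1 − θ₀*)z + θ₀* has modulus at most r*. -/

import Mathlib

/-- Auxiliary: roots of a real monic quadratic with nonpositive discriminant have
|z|² ≤ c. -/
lemma quad_root_abs_le (b c : ℝ) (hdisc : b ^ 2 ≤ 4 * c) (z : ℂ)
    (hz : z ^ 2 + (b : ℂ) * z + (c : ℂ) = 0) :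
    ‖z‖ ^ 2 ≤ c := by
  set x := z.re with hx
  set y := z.im with hy
  have hre : x ^ 2 - y ^ 2 + b * x + c = 0 := by
    have := congrArg Complex.re hz
    simpa [Complex.add_re, Complex.mul_re, pow_two, Complex.mul_im] using this
  have him : y * (2 * x + b) = 0 := by
    have := congrArg Complex.im hz
    simp [Complex.add_im, Complex.mul_im, pow_two, Complex.mul_re] at this
    nlinarith [this]
  have habs : ‖z‖ ^ 2 = x ^ 2 + y ^ 2 := by
    rw [Complex.sq_norm, Complex.normSq_apply]; ring
  rw [habs]
  rcases mul_eq_zero.mp him with hy0 | hxb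
  · -- real root, discriminant forces b² = 4c, x = -b/2
    have h1 : (2 * x + b) ^ 2 ≤ 0 := by nlinarith
    have h2 : 2 * x + b = 0 := by nlinarith [sq_nonneg (2 * x + b)]
    have h3 : x * (2 * x + b) = 0 := by rw [h2]; ring
    nlinarith [h3]
  · -- x = -b/2, |z|² = c
    have h3 : x * (2 * x + b) = 0 := by rw [hxb]; ring
    nlinarith [h3]

theorem stmt_2 (lam2 lamN : ℝ) (h2 : 0 < lam2) (h2N : lam2 ≤ lamN)
    (rstar ε₀ θ₀ : ℝ)
    (hr : rstar = (Real.sqrt lamN - Real.sqrt lam2) / (Real.sqrt lamN + Real.sqrt lam2))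
    (hε₀ : ε₀ = 4 / (Real.sqrt lamN + Real.sqrt lam2) ^ 2)
    (hθ₀ : θ₀ = rstar ^ 2) :
    ∀ lam : ℝ, lam2 ≤ lam → lam ≤ lamN →
      ∀ z : ℂ, z ^ 2 + ((ε₀ * lam - 1 - θ₀ : ℝ) : ℂ) * z + ((θ₀ : ℝ) : ℂ) = 0 →
        ‖z‖ ≤ rstar := by
  intro lam hl2 hlN z hz
  set s2 := Real.sqrt lam2 with hs2def
  set sN := Real.sqrt lamN with hsNdef
  have hs2 : 0 < s2 := Real.sqrt_pos.mpr h2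
  have hsle : s2 ≤ sN := Real.sqrt_le_sqrt h2N
  have hsum : 0 < sN + s2 := by linarith
  have hs2sq : s2 ^ 2 = lam2 := Real.sq_sqrt h2.le
  have hsNsq : sN ^ 2 = lamN := Real.sq_sqrt (h2.le.trans h2N)
  have hrnn : 0 ≤ rstar := by
    rw [hr]; exact div_nonneg (by linarith) hsum.le
  have heq1 : ε₀ * lam2 = (1 - rstar) ^ 2 := by
    rw [hε₀, hr, ← hs2sq]; field_simp; ring
  have heq2 : ε₀ * lamN = (1 + rstar) ^ 2 := by
    rw [hε₀, hr, ← hsNsq]; field_simp; ring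
  have hε₀pos : 0 < ε₀ := by
    rw [hε₀]; positivity
  have hlow : (1 - rstar) ^ 2 ≤ ε₀ * lam := by
    rw [← heq1]; exact mul_le_mul_of_nonneg_left hl2 hε₀pos.le
  have hhigh : ε₀ * lam ≤ (1 + rstar) ^ 2 := by
    rw [← heq2]; exact mul_le_mul_of_nonneg_left hlN hε₀pos.le
  have hdisc : (ε₀ * lam - 1 - θ₀) ^ 2 ≤ 4 * θ₀ := by
    rw [hθ₀]
    nlinarith [mul_nonpos_of_nonneg_of_nonpos (sub_nonneg.mpr hlow)
      (sub_nonpos.mpr hhigh)]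
  have := quad_root_abs_le _ _ hdisc z hz
  rw [hθ₀] at this
  nlinarith [norm_nonneg z]
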